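/- Coverage under a bounded probability of false alarm: let C := {t ∈ ℕ : t ≤ τ, M_t < 2/α} for some α ∈ (0,1). If the detection procedure controls the probability of false alarm at level δ ∈ (0,1), i.e., P_{F₀,∞}(τ < ∞) ≤ δ for every F₀ ∈ 𝒫₀, then for every F₀ ∈ 𝒫₀, F₁ ∈ 𝒫₁, and T ∈ ℕ: P_{F₀,T,F₁}(T ∈ C) ≥ 1 − α − δ; and moreover, if P_{F₀,∞}(τ ≥ T) > 0 for all F₀ ∈ 𝒫₀, then P_{F₀,T,F₁}(T ∈ C | τ ≥ T) ≥ 1 − α/(1 − δ). -/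

import Mathlib

open MeasureTheory ProbabilityTheory Filter Set
open scoped ENNReal NNReal

namespace SeqChange

variable {𝒳 : Type*} [MeasurableSpace 𝒳]

/-- The σ-algebra on the sequence space generated by the coordinates with indices in `s`. -/
def coordSigma (𝒳 : Type*) [MeasurableSpace 𝒳] (s : Set ℕ) : MeasurableSpace (ℕ → 𝒳) :=
  ⨆ i ∈ s, MeasurableSpace.comap (fun ω : ℕ → 𝒳 => ω i) inferInstance

/-- The natural filtration `σ(X₁, …, Xₙ)` of the observation sequence (observations are
indexed from 1; coordinate 0 is unused). -/
def natFilt (𝒳 : Type*) [MeasurableSpace 𝒳] (n : ℕ) : MeasurableSpace (ℕ → 𝒳) :=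
  coordSigma 𝒳 {i | 1 ≤ i ∧ i ≤ n}

/-- `τ` is a stopping time with respect to the natural filtration of the observation
sequence, taking values in `ℕ ∪ {∞}`. -/
def IsStoppingTimeSeq (τ : (ℕ → 𝒳) → ℕ∞) : Prop :=
  ∀ n : ℕ, MeasurableSet[natFilt 𝒳 n] {ω | τ ω ≤ (n : ℕ∞)}

/-- `P` is the joint law of a sequence of independent observations `X₁, X₂, …` with
`Xₙ ~ ν n` for every `n ≥ 1`: a probability measure whose finite-dimensional
distributions on the coordinates with indices `≥ 1` are the corresponding products. -/
def IsProductLaw (P : Measure (ℕ → 𝒳)) (ν : ℕ → Measure 𝒳) : Prop :=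
  IsProbabilityMeasure P ∧
    ∀ s : Finset ℕ, (∀ i ∈ s, 1 ≤ i) → ∀ A : ℕ → Set 𝒳, (∀ i, MeasurableSet (A i)) →
      P {ω | ∀ i ∈ s, ω i ∈ A i} = ∏ i ∈ s, ν i (A i)

/-- `P` is the law `P_{F₀,T,F₁}`: independent coordinates, `Xₙ ~ F₀` for `n < T` and
`Xₙ ~ F₁` for `n ≥ T`. -/
def IsChangeLaw (P : Measure (ℕ → 𝒳)) (F₀ F₁ : Measure 𝒳) (T : ℕ) : Prop :=
  IsProductLaw P (fun n => if n < T then F₀ else F₁)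

/-- `P` is the law `P_{F₀,∞}`: all coordinates i.i.d. `F₀` (no change ever occurs). -/
def IsNoChangeLaw (P : Measure (ℕ → 𝒳)) (F₀ : Measure 𝒳) : Prop :=
  IsProductLaw P (fun _ => F₀)

/-- Under `Q`, the coordinates with indices in `I` are i.i.d. with law `ν`. -/
def IsIIDOn (Q : Measure (ℕ → 𝒳)) (ν : Measure 𝒳) (I : Set ℕ) : Prop :=
  IsProbabilityMeasure Q ∧
    ∀ s : Finset ℕ, (↑s ⊆ I) → ∀ A : ℕ → Set 𝒳, (∀ i, MeasurableSet (A i)) →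
      Q {ω | ∀ i ∈ s, ω i ∈ A i} = ∏ i ∈ s, ν (A i)

/-- Forward filtration `σ(X_t, …, X_n)`. -/
def fwdFilt (𝒳 : Type*) [MeasurableSpace 𝒳] (t n : ℕ) : MeasurableSpace (ℕ → 𝒳) :=
  coordSigma 𝒳 {i | t ≤ i ∧ i ≤ n}

/-- Backward filtration `σ(X_n, …, X_{t-1})`. -/
def bwdFilt (𝒳 : Type*) [MeasurableSpace 𝒳] (t n : ℕ) : MeasurableSpace (ℕ → 𝒳) :=
  coordSigma 𝒳 {i | n ≤ i ∧ i < t}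

/-- A forward `t`-delay e-process under the class `𝒫₁`: a nonnegative process
`(R n)_{n ≥ t}` adapted to the forward filtration `σ(X_t, …, X_n)` such that for every
`F₁ ∈ 𝒫₁`, every law `Q` under which `X_t, X_{t+1}, …` are i.i.d. `F₁`, and every
stopping time `κ ≥ t` of the forward filtration, `E_Q[R_κ] ≤ 1`. -/
def IsForwardEProcess (𝒫₁ : Set (Measure 𝒳)) (t : ℕ) (R : ℕ → (ℕ → 𝒳) → ℝ≥0∞) : Prop :=
  (∀ n, t ≤ n → Measurable[fwdFilt 𝒳 t n] (R n)) ∧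
    ∀ F₁ ∈ 𝒫₁, ∀ Q : Measure (ℕ → 𝒳), IsIIDOn Q F₁ {i | t ≤ i} →
      ∀ κ : (ℕ → 𝒳) → ℕ, (∀ ω, t ≤ κ ω) →
        (∀ n, MeasurableSet[fwdFilt 𝒳 t n] {ω | κ ω ≤ n}) →
        ∫⁻ ω, R (κ ω) ω ∂Q ≤ 1

/-- A backward `t`-delay e-process under the class `𝒫₀`: a nonnegative process
`(S n)_{1 ≤ n < t}` adapted to the backward filtration `σ(X_n, …, X_{t-1})` such that for
every `F₀ ∈ 𝒫₀`, every law `Q` under which `X₁, …, X_{t-1}` are i.i.d. `F₀`, and every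
stopping time `κ` of the backward filtration with `1 ≤ κ < t`, `E_Q[S_κ] ≤ 1`. -/
def IsBackwardEProcess (𝒫₀ : Set (Measure 𝒳)) (t : ℕ) (S : ℕ → (ℕ → 𝒳) → ℝ≥0∞) : Prop :=
  (∀ n, 1 ≤ n → n < t → Measurable[bwdFilt 𝒳 t n] (S n)) ∧
    ∀ F₀ ∈ 𝒫₀, ∀ Q : Measure (ℕ → 𝒳), IsIIDOn Q F₀ {i | 1 ≤ i ∧ i < t} →
      ∀ κ : (ℕ → 𝒳) → ℕ, (∀ ω, 1 ≤ κ ω ∧ κ ω < t) →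
        (∀ n, MeasurableSet[bwdFilt 𝒳 t n] {ω | n ≤ κ ω}) →
        ∫⁻ ω, S (κ ω) ω ∂Q ≤ 1

/-- The localization statistic `M_t` built from the estimator `T̂`, forward e-processes `R`
and backward e-processes `S`: `M_t = R^{(t)}_{T̂ - 1}` if `t < T̂ ≤ τ < ∞`, `M_t = 1` if
`t = T̂ ≤ τ < ∞`, `M_t = S^{(t)}_{T̂}` if `T̂ < t ≤ τ < ∞`, and `M_t = -∞` if `t > τ` or
`τ = ∞`. -/
noncomputable def eStat (τ : (ℕ → 𝒳) → ℕ∞) (That : (ℕ → 𝒳) → ℕ)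
    (R S : ℕ → ℕ → (ℕ → 𝒳) → ℝ≥0∞) (t : ℕ) (ω : ℕ → 𝒳) : EReal :=
  if (t : ℕ∞) ≤ τ ω ∧ τ ω ≠ ⊤ then
    if t < That ω then ((R t (That ω - 1) ω : ℝ≥0∞) : EReal)
    else if t = That ω then 1
    else ((S t (That ω) ω : ℝ≥0∞) : EReal)
  else ⊥

section Aux
variable {𝒳 : Type*} [MeasurableSpace 𝒳]

lemma coordSigma_le (s : Set ℕ) : coordSigma 𝒳 s ≤ (inferInstance : MeasurableSpace (ℕ → 𝒳)) :=
  iSup₂_le fun i _ => Measurable.comap_le (measurable_pi_apply i)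

lemma coordSigma_mono {s t : Set ℕ} (h : s ⊆ t) : coordSigma 𝒳 s ≤ coordSigma 𝒳 t :=
  iSup₂_le fun i hi => le_iSup₂ (f := fun (i : ℕ) (_ : i ∈ t) =>
    MeasurableSpace.comap (fun ω : ℕ → 𝒳 => ω i) inferInstance) i (h hi)

def cyl (𝒳 : Type*) [MeasurableSpace 𝒳] (s : Set ℕ) : Set (Set (ℕ → 𝒳)) :=
  {E | ∃ (t : Finset ℕ) (A : ℕ → Set 𝒳), ↑t ⊆ s ∧ (∀ i, MeasurableSet (A i)) ∧
    E = {ω | ∀ i ∈ t, ω i ∈ A i}}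

lemma isPiSystem_cyl (s : Set ℕ) : IsPiSystem (cyl 𝒳 s) := by
  rintro _ ⟨t, A, hts, hA, rfl⟩ _ ⟨t', A', ht's, hA', rfl⟩ -
  refine ⟨t ∪ t', fun i => (if i ∈ t then A i else Set.univ) ∩ (if i ∈ t' then A' i else Set.univ),
    ?_, ?_, ?_⟩
  · rw [Finset.coe_union]; exact Set.union_subset hts ht's
  · intro i
    refine MeasurableSet.inter ?_ ?_ <;> (split <;> simp [hA i, hA' i])
  · ext ω
    simp only [Set.mem_inter_iff, Set.mem_setOf_eq, Finset.mem_union]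
    constructor
    · rintro ⟨h1, h2⟩ i hi
      constructor
      · by_cases h : i ∈ t
        · simpa [h] using h1 i h
        · simp [h]
      · by_cases h : i ∈ t'
        · simpa [h] using h2 i h
        · simp [h]
    · intro h
      constructor
      · intro i hi; have := (h i (Or.inl hi)).1; simpa [hi] using this
      · intro i hi; have := (h i (Or.inr hi)).2; simpa [hi] using this

lemma coordSigma_eq_generateFrom (s : Set ℕ) :
    coordSigma 𝒳 s = MeasurableSpace.generateFrom (cyl 𝒳 s) := by
  apply le_antisymm
  · refine iSup₂_le fun i hi => ?_
    intro E hE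
    obtain ⟨B, hB, rfl⟩ := hE
    apply MeasurableSpace.measurableSet_generateFrom
    refine ⟨{i}, fun _ => B, by simpa using hi, fun _ => hB, ?_⟩
    ext ω; simp
  · refine MeasurableSpace.generateFrom_le ?_
    rintro _ ⟨t, A, hts, hA, rfl⟩
    have : {ω : ℕ → 𝒳 | ∀ i ∈ t, ω i ∈ A i} = ⋂ i ∈ t, (fun ω : ℕ → 𝒳 => ω i) ⁻¹' A i := by
      ext ω; simp
    rw [this]
    refine MeasurableSet.biInter t.countable_toSet fun i hi => ?_
    have h1 : MeasurableSet[MeasurableSpace.comap (fun ω : ℕ → 𝒳 => ω i) inferInstance]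
        ((fun ω : ℕ → 𝒳 => ω i) ⁻¹' A i) := ⟨A i, hA i, rfl⟩
    exact le_iSup₂ (f := fun (i : ℕ) (_ : i ∈ s) =>
      MeasurableSpace.comap (fun ω : ℕ → 𝒳 => ω i) inferInstance) i (hts hi) _ h1

lemma productLaw_agree {P P' : Measure (ℕ → 𝒳)} {ν ν' : ℕ → Measure 𝒳}
    (hP : IsProductLaw P ν) (hP' : IsProductLaw P' ν') (n : ℕ)
    (hν : ∀ i, 1 ≤ i → i ≤ n → ν i = ν' i) :
    ∀ E : Set (ℕ → 𝒳), MeasurableSet[natFilt 𝒳 n] E → P E = P' E := by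
  haveI := hP.1; haveI := hP'.1
  have hgen : natFilt 𝒳 n = MeasurableSpace.generateFrom (cyl 𝒳 {i | 1 ≤ i ∧ i ≤ n}) :=
    coordSigma_eq_generateFrom _
  intro E hE
  refine @MeasurableSpace.induction_on_inter _ (natFilt 𝒳 n) (fun E _ => P E = P' E) _ hgen
    (isPiSystem_cyl _) (by simp) ?_ ?_ ?_ E hE
  · rintro _ ⟨t, A, hts, hA, rfl⟩
    rw [hP.2 t (fun i hi => (hts (Finset.mem_coe.2 hi)).1) A hA,
      hP'.2 t (fun i hi => (hts (Finset.mem_coe.2 hi)).1) A hA]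
    exact Finset.prod_congr rfl fun i hi => by
      rw [hν i (hts (Finset.mem_coe.2 hi)).1 (hts (Finset.mem_coe.2 hi)).2]
  · intro E hE hPE
    have hEm : MeasurableSet E := coordSigma_le _ _ hE
    rw [measure_compl hEm (measure_ne_top _ _), measure_compl hEm (measure_ne_top _ _),
      measure_univ, measure_univ, hPE]
  · intro f hdisj hmeas hPf
    have hm : ∀ i, MeasurableSet (f i) := fun i => coordSigma_le _ _ (hmeas i)
    rw [measure_iUnion hdisj hm, measure_iUnion hdisj hm]
    exact tsum_congr hPf

lemma IsChangeLaw.iidOn_ge {P : Measure (ℕ → 𝒳)} {F₀ F₁ : Measure 𝒳} {T : ℕ} (hT : 1 ≤ T)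
    (hP : IsChangeLaw P F₀ F₁ T) : IsIIDOn P F₁ {i | T ≤ i} := by
  refine ⟨hP.1, fun s hs A hA => ?_⟩
  rw [hP.2 s (fun i hi => le_trans hT (hs (Finset.mem_coe.2 hi))) A hA]
  exact Finset.prod_congr rfl fun i hi => by
    simp [not_lt.2 (show T ≤ i from hs (Finset.mem_coe.2 hi))]

lemma IsChangeLaw.iidOn_lt {P : Measure (ℕ → 𝒳)} {F₀ F₁ : Measure 𝒳} {T : ℕ}
    (hP : IsChangeLaw P F₀ F₁ T) : IsIIDOn P F₀ {i | 1 ≤ i ∧ i < T} := by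
  refine ⟨hP.1, fun s hs A hA => ?_⟩
  rw [hP.2 s (fun i hi => (hs (Finset.mem_coe.2 hi)).1) A hA]
  exact Finset.prod_congr rfl fun i hi => by simp [(hs (Finset.mem_coe.2 hi)).2]

lemma forward_ville {𝒫₁ : Set (Measure 𝒳)} {T : ℕ} (hT : 1 ≤ T)
    {R : ℕ → (ℕ → 𝒳) → ℝ≥0∞} (hR : IsForwardEProcess 𝒫₁ T R)
    {F₁ : Measure 𝒳} (hF₁ : F₁ ∈ 𝒫₁) {Q : Measure (ℕ → 𝒳)}
    (hQ : IsIIDOn Q F₁ {i | T ≤ i}) {c : ℝ≥0∞} (hc0 : c ≠ 0) (hctop : c ≠ ∞) :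
    Q {ω | ∃ m, T ≤ m ∧ c ≤ R m ω} ≤ c⁻¹ := by
  classical
  set E : ℕ → Set (ℕ → 𝒳) := fun N => {ω | ∃ m, T ≤ m ∧ m ≤ N ∧ c ≤ R m ω} with hE
  have hEmeas : ∀ N, MeasurableSet (E N) := by
    intro N
    have : E N = ⋃ m, ⋃ (_ : T ≤ m ∧ m ≤ N), R m ⁻¹' Set.Ici c := by
      ext ω
      simp only [hE, Set.mem_setOf_eq, Set.mem_iUnion, Set.mem_preimage, Set.mem_Ici]
      tauto
    rw [this]
    refine MeasurableSet.iUnion fun m => MeasurableSet.iUnion fun hm => ?_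
    exact ((hR.1 m hm.1).mono (coordSigma_le _) le_rfl) measurableSet_Ici
  have hbound : ∀ N, Q (E N) ≤ c⁻¹ := by
    intro N
    rcases lt_or_ge N T with hNT | hTN
    · have : E N = ∅ := by
        ext ω; simp only [hE, Set.mem_setOf_eq, Set.mem_empty_iff_false, iff_false]
        rintro ⟨m, h1, h2, -⟩; omega
      simp [this]
    · set κ : (ℕ → 𝒳) → ℕ :=
        fun ω => if h : ∃ m, (T ≤ m ∧ m ≤ N) ∧ c ≤ R m ω then Nat.find h else N with hκdef
      have hκ1 : ∀ ω, T ≤ κ ω := by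
        intro ω; simp only [hκdef]; split
        · next h => exact (Nat.find_spec h).1.1
        · exact hTN
      have hκN : ∀ ω, κ ω ≤ N := by
        intro ω; simp only [hκdef]; split
        · next h => exact (Nat.find_spec h).1.2
        · exact le_rfl
      have hκst : ∀ n, MeasurableSet[fwdFilt 𝒳 T n] {ω | κ ω ≤ n} := by
        intro n
        rcases le_or_gt N n with hNn | hnN
        · have : {ω | κ ω ≤ n} = Set.univ :=
            Set.eq_univ_of_forall fun ω => le_trans (hκN ω) hNn
          rw [this]; exact MeasurableSet.univ
        · have hset : {ω | κ ω ≤ n} = ⋃ m, ⋃ (_ : T ≤ m ∧ m ≤ n), R m ⁻¹' Set.Ici c := by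
            ext ω
            simp only [Set.mem_setOf_eq, Set.mem_iUnion, Set.mem_preimage, Set.mem_Ici]
            constructor
            · intro hκn
              by_cases h : ∃ m, (T ≤ m ∧ m ≤ N) ∧ c ≤ R m ω
              · have hfind : κ ω = Nat.find h := by simp [hκdef, h]
                refine ⟨Nat.find h, ⟨(Nat.find_spec h).1.1, ?_⟩, (Nat.find_spec h).2⟩
                omega
              · exfalso
                have : κ ω = N := by simp [hκdef, h]
                omega
            · rintro ⟨m, ⟨hTm, hmn⟩, hcm⟩
              have h : ∃ m, (T ≤ m ∧ m ≤ N) ∧ c ≤ R m ω :=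
                ⟨m, ⟨hTm, le_trans hmn (le_of_lt hnN)⟩, hcm⟩
              have hfind : κ ω = Nat.find h := by simp [hκdef, h]
              rw [hfind]
              exact le_trans (Nat.find_min' h ⟨⟨hTm, le_trans hmn (le_of_lt hnN)⟩, hcm⟩) hmn
          rw [hset]
          refine MeasurableSet.iUnion fun m => MeasurableSet.iUnion fun hm => ?_
          refine ((hR.1 m hm.1).mono (coordSigma_mono ?_) le_rfl) measurableSet_Ici
          exact fun i hi => ⟨hi.1, le_trans hi.2 hm.2⟩
      have hint := hR.2 F₁ hF₁ Q hQ κ hκ1 hκst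
      have hsub : ∀ ω ∈ E N, c ≤ R (κ ω) ω := by
        intro ω hω
        obtain ⟨m, hTm, hmN, hcm⟩ := hω
        have h : ∃ m, (T ≤ m ∧ m ≤ N) ∧ c ≤ R m ω := ⟨m, ⟨hTm, hmN⟩, hcm⟩
        have hfind : κ ω = Nat.find h := by simp [hκdef, h]
        rw [hfind]; exact (Nat.find_spec h).2
      have hmarkov : c * Q (E N) ≤ 1 := by
        calc c * Q (E N) = ∫⁻ _ in E N, c ∂Q := (setLIntegral_const _ _).symm
        _ ≤ ∫⁻ ω in E N, R (κ ω) ω ∂Q := setLIntegral_mono' (hEmeas N) hsub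
        _ ≤ ∫⁻ ω, R (κ ω) ω ∂Q := setLIntegral_le_lintegral _ _
        _ ≤ 1 := hint
      calc Q (E N) = c⁻¹ * (c * Q (E N)) := by
            rw [← mul_assoc, ENNReal.inv_mul_cancel hc0 hctop, one_mul]
      _ ≤ c⁻¹ * 1 := mul_le_mul_right hmarkov _
      _ = c⁻¹ := mul_one _
  have hunion : {ω | ∃ m, T ≤ m ∧ c ≤ R m ω} = ⋃ N, E N := by
    ext ω
    simp only [hE, Set.mem_setOf_eq, Set.mem_iUnion]
    constructor
    · rintro ⟨m, h1, h2⟩; exact ⟨m, m, h1, le_rfl, h2⟩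
    · rintro ⟨N, m, h1, h2, h3⟩; exact ⟨m, h1, h3⟩
  have hmono : Monotone E := by
    intro N N' h ω hω
    obtain ⟨m, h1, h2, h3⟩ := hω
    exact ⟨m, h1, le_trans h2 h, h3⟩
  rw [hunion, hmono.measure_iUnion]
  exact iSup_le hbound

lemma backward_ville {𝒫₀ : Set (Measure 𝒳)} {T : ℕ} (hT2 : 2 ≤ T)
    {S : ℕ → (ℕ → 𝒳) → ℝ≥0∞} (hS : IsBackwardEProcess 𝒫₀ T S)
    {F₀ : Measure 𝒳} (hF₀ : F₀ ∈ 𝒫₀) {Q : Measure (ℕ → 𝒳)}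
    (hQ : IsIIDOn Q F₀ {i | 1 ≤ i ∧ i < T}) {c : ℝ≥0∞} (hc0 : c ≠ 0) (hctop : c ≠ ∞) :
    Q {ω | ∃ m, 1 ≤ m ∧ m < T ∧ c ≤ S m ω} ≤ c⁻¹ := by
  classical
  set ES : Set (ℕ → 𝒳) := {ω | ∃ m, 1 ≤ m ∧ m < T ∧ c ≤ S m ω} with hESdef
  have hESmeas : MeasurableSet ES := by
    have : ES = ⋃ m, ⋃ (_ : 1 ≤ m ∧ m < T), S m ⁻¹' Set.Ici c := by
      ext ω
      simp only [hESdef, Set.mem_setOf_eq, Set.mem_iUnion, Set.mem_preimage, Set.mem_Ici]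
      tauto
    rw [this]
    refine MeasurableSet.iUnion fun m => MeasurableSet.iUnion fun hm => ?_
    exact ((hS.1 m hm.1 hm.2).mono (coordSigma_le _) le_rfl) measurableSet_Ici
  set κ : (ℕ → 𝒳) → ℕ :=
    fun ω => max (Nat.findGreatest (fun m => c ≤ S m ω) (T - 1)) 1 with hκdef
  have hκ : ∀ ω, 1 ≤ κ ω ∧ κ ω < T := by
    intro ω
    refine ⟨le_max_right _ _, ?_⟩
    have h1 : Nat.findGreatest (fun m => c ≤ S m ω) (T - 1) ≤ T - 1 := Nat.findGreatest_le _
    simp only [hκdef]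
    omega
  have hκst : ∀ n, MeasurableSet[bwdFilt 𝒳 T n] {ω | n ≤ κ ω} := by
    intro n
    rcases le_or_gt n 1 with hn1 | h1n
    · have : {ω : ℕ → 𝒳 | n ≤ κ ω} = Set.univ :=
        Set.eq_univ_of_forall fun ω => le_trans hn1 (hκ ω).1
      rw [this]; exact MeasurableSet.univ
    rcases le_or_gt T n with hTn | hnT
    · have : {ω : ℕ → 𝒳 | n ≤ κ ω} = ∅ := by
        ext ω
        simp only [Set.mem_setOf_eq, Set.mem_empty_iff_false, iff_false, not_le]
        exact lt_of_lt_of_le (hκ ω).2 hTn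
      rw [this]; exact @MeasurableSet.empty _ (bwdFilt 𝒳 T n)
    · have hset : {ω : ℕ → 𝒳 | n ≤ κ ω} = ⋃ m, ⋃ (_ : n ≤ m ∧ m < T), S m ⁻¹' Set.Ici c := by
        ext ω
        simp only [Set.mem_setOf_eq, Set.mem_iUnion, Set.mem_preimage, Set.mem_Ici]
        constructor
        · intro hn
          have hG : n ≤ Nat.findGreatest (fun m => c ≤ S m ω) (T - 1) := by
            rcases le_max_iff.1 hn with h | h
            · exact h
            · omega
          have hGpos : 0 < Nat.findGreatest (fun m => c ≤ S m ω) (T - 1) := by omega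
          obtain ⟨m₀, hm₀pos, hm₀le, hm₀P⟩ := Nat.findGreatest_pos.1 hGpos
          have hPG : c ≤ S (Nat.findGreatest (fun m => c ≤ S m ω) (T - 1)) ω :=
            Nat.findGreatest_spec (P := fun m => c ≤ S m ω) hm₀le hm₀P
          have hle : Nat.findGreatest (fun m => c ≤ S m ω) (T - 1) ≤ T - 1 :=
            Nat.findGreatest_le _
          exact ⟨_, ⟨hG, by omega⟩, hPG⟩
        · rintro ⟨m, ⟨hnm, hmT⟩, hcm⟩
          have hm : m ≤ Nat.findGreatest (fun m => c ≤ S m ω) (T - 1) :=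
            Nat.le_findGreatest (by omega) hcm
          exact le_trans hnm (le_trans hm (le_max_left _ _))
      rw [hset]
      refine MeasurableSet.iUnion fun m => MeasurableSet.iUnion fun hm => ?_
      obtain ⟨hnm, hmT⟩ := hm
      refine ((hS.1 m (by omega) hmT).mono (coordSigma_mono ?_) le_rfl) measurableSet_Ici
      exact fun i hi => ⟨le_trans hnm hi.1, hi.2⟩
  have hint := hS.2 F₀ hF₀ Q hQ κ hκ hκst
  have hsub : ∀ ω ∈ ES, c ≤ S (κ ω) ω := by
    intro ω hω
    obtain ⟨m, h1m, hmT, hcm⟩ := hω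
    have hPG : c ≤ S (Nat.findGreatest (fun m => c ≤ S m ω) (T - 1)) ω :=
      Nat.findGreatest_spec (P := fun m => c ≤ S m ω) (m := m) (by omega) hcm
    have hGm : m ≤ Nat.findGreatest (fun m => c ≤ S m ω) (T - 1) :=
      Nat.le_findGreatest (by omega) hcm
    have hκeq : κ ω = Nat.findGreatest (fun m => c ≤ S m ω) (T - 1) := by
      simp only [hκdef]
      exact max_eq_left (le_trans h1m hGm)
    rw [hκeq]; exact hPG
  have hmarkov : c * Q ES ≤ 1 := by
    calc c * Q ES = ∫⁻ _ in ES, c ∂Q := (setLIntegral_const _ _).symm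
    _ ≤ ∫⁻ ω in ES, S (κ ω) ω ∂Q := setLIntegral_mono' hESmeas hsub
    _ ≤ ∫⁻ ω, S (κ ω) ω ∂Q := setLIntegral_le_lintegral _ _
    _ ≤ 1 := hint
  calc Q ES = c⁻¹ * (c * Q ES) := by
        rw [← mul_assoc, ENNReal.inv_mul_cancel hc0 hctop, one_mul]
  _ ≤ c⁻¹ * 1 := mul_le_mul_right hmarkov _
  _ = c⁻¹ := mul_one _

lemma enat_lt_coe_iff {T : ℕ} (hT : 1 ≤ T) (x : ℕ∞) :
    x < (T : ℕ∞) ↔ x ≤ ((T - 1 : ℕ) : ℕ∞) := by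
  induction x using ENat.recTopCoe with
  | top => simp
  | coe m => rw [Nat.cast_lt, Nat.cast_le]; omega


end Aux

/-- Coverage under a bounded probability of false alarm: with
`C := {t ≤ τ : M_t < 2/α}` and a detection procedure with `P_{F₀,∞}(τ < ∞) ≤ δ` for
every `F₀ ∈ 𝒫₀`, one has `P_{F₀,T,F₁}(T ∈ C) ≥ 1 − α − δ`; moreover, if
`P_{F₀,∞}(τ ≥ T) > 0`, then `P_{F₀,T,F₁}(T ∈ C | τ ≥ T) ≥ 1 − α/(1 − δ)`. -/
theorem pfa_coverage
    {𝒳 : Type*} [MeasurableSpace 𝒳]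
    (𝒫₀ 𝒫₁ : Set (Measure 𝒳)) (hdisj : Disjoint 𝒫₀ 𝒫₁)
    (τ : (ℕ → 𝒳) → ℕ∞) (hτ : IsStoppingTimeSeq τ)
    (That : (ℕ → 𝒳) → ℕ)
    (hThat : ∀ ω, τ ω ≠ ⊤ → 1 ≤ That ω ∧ (That ω : ℕ∞) ≤ τ ω)
    (R S : ℕ → ℕ → (ℕ → 𝒳) → ℝ≥0∞)
    (hR : ∀ t : ℕ, 1 ≤ t → IsForwardEProcess 𝒫₁ t (R t))
    (hS : ∀ t : ℕ, 1 ≤ t → IsBackwardEProcess 𝒫₀ t (S t))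
    (α δ : ℝ) (hα : α ∈ Set.Ioo (0 : ℝ) 1) (hδ : δ ∈ Set.Ioo (0 : ℝ) 1)
    (hPFA : ∀ F₀ ∈ 𝒫₀, ∀ Pinf : Measure (ℕ → 𝒳), IsNoChangeLaw Pinf F₀ →
      Pinf {ω | τ ω ≠ ⊤} ≤ ENNReal.ofReal δ) :
    ∀ F₀ ∈ 𝒫₀, ∀ F₁ ∈ 𝒫₁, ∀ T : ℕ, 1 ≤ T →
      ∀ P Pinf : Measure (ℕ → 𝒳), IsChangeLaw P F₀ F₁ T → IsNoChangeLaw Pinf F₀ →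
      (ENNReal.ofReal (1 - α - δ) ≤
        P {ω | T ∈ {t : ℕ | 1 ≤ t ∧ (t : ℕ∞) ≤ τ ω ∧
          eStat τ That R S t ω < ((2 / α : ℝ) : EReal)}}) ∧
      (Pinf {ω | (T : ℕ∞) ≤ τ ω} ≠ 0 →
        ENNReal.ofReal (1 - α / (1 - δ)) ≤
          ProbabilityTheory.cond P {ω | (T : ℕ∞) ≤ τ ω}
            {ω | T ∈ {t : ℕ | 1 ≤ t ∧ (t : ℕ∞) ≤ τ ω ∧
              eStat τ That R S t ω < ((2 / α : ℝ) : EReal)}}) := by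
  intro F₀ hF₀ F₁ hF₁ T hT P Pinf hP hPinf
  classical
  haveI : IsProbabilityMeasure P := hP.1
  haveI : IsProbabilityMeasure Pinf := hPinf.1
  obtain ⟨hα0, hα1⟩ := hα
  obtain ⟨hδ0, hδ1⟩ := hδ
  have h2α : (0:ℝ) < 2 / α := by positivity
  set c : ℝ≥0∞ := ENNReal.ofReal (2 / α) with hcdef
  have hc0 : c ≠ 0 := ne_of_gt (ENNReal.ofReal_pos.2 h2α)
  have hctop : c ≠ ∞ := ENNReal.ofReal_ne_top
  have hcE : (c : EReal) = ((2 / α : ℝ) : EReal) := by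
    rw [hcdef, EReal.coe_ennreal_ofReal, max_eq_left h2α.le]
  have hinv : c⁻¹ = ENNReal.ofReal (α / 2) := by
    rw [hcdef, ← ENNReal.ofReal_inv_of_pos h2α, inv_div]
  set G : Set (ℕ → 𝒳) := {ω | T ∈ {t : ℕ | 1 ≤ t ∧ (t : ℕ∞) ≤ τ ω ∧
    eStat τ That R S t ω < ((2 / α : ℝ) : EReal)}} with hGdef
  set F : Set (ℕ → 𝒳) := {ω | τ ω < (T : ℕ∞)} with hFdef
  set A : Set (ℕ → 𝒳) := {ω | (T : ℕ∞) ≤ τ ω} with hAdef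
  set ER : Set (ℕ → 𝒳) := {ω | ∃ m, T ≤ m ∧ c ≤ R T m ω} with hERdef
  set ES : Set (ℕ → 𝒳) := {ω | ∃ m, 1 ≤ m ∧ m < T ∧ c ≤ S T m ω} with hESdef
  -- bounds on the bad events
  have hERbound : P ER ≤ ENNReal.ofReal (α / 2) := by
    have h := forward_ville hT (hR T hT) hF₁ (hP.iidOn_ge hT) hc0 hctop
    rw [hinv] at h; exact h
  have hESbound : P ES ≤ ENNReal.ofReal (α / 2) := by
    rcases lt_or_ge T 2 with h2 | h2
    · have : ES = ∅ := by
        ext ω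
        simp only [hESdef, Set.mem_setOf_eq, Set.mem_empty_iff_false, iff_false]
        rintro ⟨m, h1, hmT, -⟩; omega
      simp [this]
    · have h := backward_ville h2 (hS T hT) hF₀ hP.iidOn_lt hc0 hctop
      rw [hinv] at h; exact h
  -- the event τ < T is determined by the pre-change coordinates
  have hFeq : F = {ω | τ ω ≤ ((T - 1 : ℕ) : ℕ∞)} := by
    ext ω; exact enat_lt_coe_iff hT (τ ω)
  have hFnat : MeasurableSet[natFilt 𝒳 (T - 1)] F := by
    rw [hFeq]; exact hτ (T - 1)
  have hFmeas : MeasurableSet F := coordSigma_le _ _ hFnat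
  have hPFeq : P F = Pinf F := by
    refine productLaw_agree hP hPinf (T - 1) (fun i h1 h2 => ?_) F hFnat
    simp only [if_pos (show i < T by omega)]
  have hPFδ : P F ≤ ENNReal.ofReal δ := by
    rw [hPFeq]
    refine le_trans (measure_mono ?_) (hPFA F₀ hF₀ Pinf hPinf)
    exact fun ω h => ne_top_of_lt h
  -- the complement of G is contained in the bad events
  have hGc : ∀ ω, ω ∉ G → ω ∈ F ∪ (ER ∪ ES) := by
    intro ω hω
    by_cases hτT : (T : ℕ∞) ≤ τ ω
    swap
    · exact Or.inl (not_le.1 hτT)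
    by_cases htop : τ ω = ⊤
    · exfalso
      refine hω ⟨hT, hτT, ?_⟩
      rw [eStat, if_neg (fun h => h.2 htop)]
      exact bot_lt_iff_ne_bot.2 (EReal.coe_ne_bot _)
    · have hTh := hThat ω htop
      have hcond : (T : ℕ∞) ≤ τ ω ∧ τ ω ≠ ⊤ := ⟨hτT, htop⟩
      have hnot : ¬ (eStat τ That R S T ω < ((2 / α : ℝ) : EReal)) :=
        fun h => hω ⟨hT, hτT, h⟩
      right
      rcases lt_trichotomy T (That ω) with h | h | h
      · left
        have he : eStat τ That R S T ω = ((R T (That ω - 1) ω : ℝ≥0∞) : EReal) := by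
          rw [eStat, if_pos hcond, if_pos h]
        rw [he] at hnot
        refine ⟨That ω - 1, by omega, ?_⟩
        have hle : ((2 / α : ℝ) : EReal) ≤ ((R T (That ω - 1) ω : ℝ≥0∞) : EReal) :=
          not_lt.1 hnot
        rw [← hcE] at hle
        exact EReal.coe_ennreal_le_coe_ennreal_iff.1 hle
      · exfalso
        apply hnot
        rw [eStat, if_pos hcond, if_neg (by omega), if_pos h]
        have h1 : (1 : ℝ) < 2 / α := by
          rw [lt_div_iff₀ hα0]; nlinarith
        exact_mod_cast EReal.coe_lt_coe_iff.2 h1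
      · right
        have he : eStat τ That R S T ω = ((S T (That ω) ω : ℝ≥0∞) : EReal) := by
          rw [eStat, if_pos hcond, if_neg (by omega), if_neg (by omega)]
        rw [he] at hnot
        refine ⟨That ω, hTh.1, h, ?_⟩
        have hle : ((2 / α : ℝ) : EReal) ≤ ((S T (That ω) ω : ℝ≥0∞) : EReal) :=
          not_lt.1 hnot
        rw [← hcE] at hle
        exact EReal.coe_ennreal_le_coe_ennreal_iff.1 hle
  have hERS : P ER + P ES ≤ ENNReal.ofReal α := by
    calc P ER + P ES ≤ ENNReal.ofReal (α / 2) + ENNReal.ofReal (α / 2) :=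
          add_le_add hERbound hESbound
    _ = ENNReal.ofReal α := by
        rw [← ENNReal.ofReal_add (by positivity) (by positivity)]
        congr 1; ring
  -- Part 1
  have part1 : ENNReal.ofReal (1 - α - δ) ≤ P G := by
    have hsub1 : (1 : ℝ≥0∞) ≤ P G + P (F ∪ (ER ∪ ES)) := by
      have huniv : (Set.univ : Set (ℕ → 𝒳)) ⊆ G ∪ (F ∪ (ER ∪ ES)) :=
        fun ω _ => (em (ω ∈ G)).elim Or.inl fun h => Or.inr (hGc ω h)
      calc (1 : ℝ≥0∞) = P Set.univ := measure_univ.symm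
      _ ≤ P (G ∪ (F ∪ (ER ∪ ES))) := measure_mono huniv
      _ ≤ P G + P (F ∪ (ER ∪ ES)) := measure_union_le _ _
    have hbad : P (F ∪ (ER ∪ ES)) ≤ ENNReal.ofReal (δ + α) := by
      calc P (F ∪ (ER ∪ ES)) ≤ P F + P (ER ∪ ES) := measure_union_le _ _
      _ ≤ P F + (P ER + P ES) := add_le_add_right (measure_union_le _ _) _
      _ ≤ ENNReal.ofReal δ + ENNReal.ofReal α := add_le_add hPFδ hERS
      _ = ENNReal.ofReal (δ + α) := (ENNReal.ofReal_add hδ0.le hα0.le).symm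
    have h1 : (1 : ℝ≥0∞) ≤ P G + ENNReal.ofReal (δ + α) :=
      le_trans hsub1 (add_le_add_right hbad _)
    have h2 : (1 : ℝ≥0∞) - ENNReal.ofReal (δ + α) ≤ P G := tsub_le_iff_right.2 h1
    calc ENNReal.ofReal (1 - α - δ) = ENNReal.ofReal (1 - (δ + α)) := by congr 1; ring
    _ = ENNReal.ofReal 1 - ENNReal.ofReal (δ + α) := ENNReal.ofReal_sub _ (by positivity)
    _ = 1 - ENNReal.ofReal (δ + α) := by rw [ENNReal.ofReal_one]
    _ ≤ P G := h2
  refine ⟨part1, fun _ => ?_⟩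
  -- Part 2
  have hAF : A = Fᶜ := by
    ext ω; simp [hAdef, hFdef, not_lt]
  have hAmeas : MeasurableSet A := hAF ▸ hFmeas.compl
  have hPA : ENNReal.ofReal (1 - δ) ≤ P A := by
    rw [hAF, measure_compl hFmeas (measure_ne_top _ _), measure_univ]
    calc ENNReal.ofReal (1 - δ) = 1 - ENNReal.ofReal δ := by
          rw [ENNReal.ofReal_sub _ hδ0.le, ENNReal.ofReal_one]
    _ ≤ 1 - P F := tsub_le_tsub_left hPFδ _
  have hPA0 : P A ≠ 0 := by
    intro h
    rw [h] at hPA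
    have := ENNReal.ofReal_eq_zero.1 (le_zero_iff.1 hPA)
    linarith
  have hPAtop : P A ≠ ⊤ := measure_ne_top _ _
  have hGA : G ⊆ A := fun ω hω => hω.2.1
  rw [ProbabilityTheory.cond_apply hAmeas, Set.inter_eq_self_of_subset_right hGA]
  have hAG : P A ≤ P G + ENNReal.ofReal α := by
    have hsplit : A ⊆ G ∪ (ER ∪ ES) := by
      intro ω hωA
      by_cases h : ω ∈ G
      · exact Or.inl h
      · rcases hGc ω h with hF' | h'
        · exact absurd (show τ ω < (T : ℕ∞) from hF') (not_lt.2 hωA)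
        · exact Or.inr h'
    calc P A ≤ P (G ∪ (ER ∪ ES)) := measure_mono hsplit
    _ ≤ P G + P (ER ∪ ES) := measure_union_le _ _
    _ ≤ P G + (P ER + P ES) := add_le_add_right (measure_union_le _ _) _
    _ ≤ P G + ENNReal.ofReal α := add_le_add_right hERS _
  set aR : ℝ := (P A).toReal with haRdef
  set gR : ℝ := (P G).toReal with hgRdef
  have hgtop : P G ≠ ⊤ := measure_ne_top _ _
  have haR : 1 - δ ≤ aR := (ENNReal.ofReal_le_iff_le_toReal hPAtop).1 hPA
  have hag : aR ≤ gR + α := by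
    have hfin : P G + ENNReal.ofReal α ≠ ⊤ :=
      ENNReal.add_ne_top.2 ⟨hgtop, ENNReal.ofReal_ne_top⟩
    have h1 : (P A).toReal ≤ (P G + ENNReal.ofReal α).toReal :=
      ENNReal.toReal_mono hfin hAG
    rwa [ENNReal.toReal_add hgtop ENNReal.ofReal_ne_top,
      ENNReal.toReal_ofReal hα0.le] at h1
  rw [mul_comm, ← div_eq_mul_inv,
    ENNReal.le_div_iff_mul_le (Or.inl hPA0) (Or.inl hPAtop)]
  have hPAeq : P A = ENNReal.ofReal aR := (ENNReal.ofReal_toReal hPAtop).symm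
  have hPGeq : P G = ENNReal.ofReal gR := (ENNReal.ofReal_toReal hgtop).symm
  rw [hPAeq, hPGeq]
  by_cases hβ : 0 ≤ 1 - α / (1 - δ)
  · rw [← ENNReal.ofReal_mul hβ]
    apply ENNReal.ofReal_le_ofReal
    have h1δ : (0:ℝ) < 1 - δ := by linarith
    have hq : 0 ≤ α / (1 - δ) := by positivity
    have hcan : α / (1 - δ) * (1 - δ) = α := div_mul_cancel₀ _ (ne_of_gt h1δ)
    have hmul : α / (1 - δ) * (1 - δ) ≤ α / (1 - δ) * aR :=
      mul_le_mul_of_nonneg_left haR hq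
    have hexp : (1 - α / (1 - δ)) * aR = aR - α / (1 - δ) * aR := by ring
    linarith
  · rw [ENNReal.ofReal_eq_zero.2 (le_of_not_ge hβ), zero_mul]
    exact zero_le'

end SeqChange
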